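/- Let 𝒴 ⊆ ℂⁿ be a p-dimensional subspace with Ritz values η₁ ≥ ⋯ ≥ η_p of A in 𝒴, assume η_p > λ_{p+1}, and let f : ℝ → ℝ satisfy |f(λ₁)| ≥ ⋯ ≥ |f(λ_p)| > ν_p where ν_p = max_{j ∈ {p+1, …, n}} |f(λⱼ)|. Let η'_p be the smallest (p-th largest) Ritz value of A in 𝒴' = f(A)𝒴, let y ∈ 𝒴 be a nonzero vector such that y' = f(A)y is a Ritz vector of A in 𝒴' associated with η'_p (i.e., y' ≠ 0, ρ(y') = η'_p, and Ay' − η'_p y' ⊥ 𝒴'), and assume λ_p > η'_p. Define y_p = Σ_{j=1}^{p} xⱼ(xⱼᴴy) and y° = f(λ_p) y_p + ν_p (y − y_p). Then λ_p > η'_p = ρ(y') ≥ ρ(y°) ≥ ρ(y) ≥ η_p > λ_{p+1} (in particular y° ≠ 0). -/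

import Mathlib

/-- The Rayleigh quotient `ρ(v) = (vᴴAv)/(vᴴv)` of the Hermitian matrix `A`. -/
noncomputable def rayleigh {n : ℕ} (A : Matrix (Fin n) (Fin n) ℂ)
    (v : EuclideanSpace ℂ (Fin n)) : ℝ :=
  ((inner ℂ v (Matrix.toEuclideanLin A v) : ℂ)).re / ‖v‖ ^ 2

/-- The `i`-th largest Ritz value (1-indexed, `i ∈ {1, …, dim S}`) of the Hermitian
matrix `A` in the subspace `S`, characterized via the Courant–Fischer max-min
principle applied inside `S` (equivalently, the `i`-th largest eigenvalue of
`SᴴAS` for any orthonormal basis matrix `S`). -/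
noncomputable def ritzValue {n : ℕ} (A : Matrix (Fin n) (Fin n) ℂ)
    (S : Submodule ℂ (EuclideanSpace ℂ (Fin n))) (i : ℕ) : ℝ :=
  sSup {r : ℝ | ∃ T : Submodule ℂ (EuclideanSpace ℂ (Fin n)), T ≤ S ∧
    Module.finrank ℂ T = i ∧ ∀ v ∈ T, v ≠ 0 → r ≤ rayleigh A v}

/-- `f(A) = ∑ j, f(λ_j) x_j x_jᴴ` as a linear operator, for eigenvalues `lam`
and orthonormal eigenvectors `x` of `A`. -/
noncomputable def matFun {n : ℕ} (lam : Fin n → ℝ)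
    (x : Fin n → EuclideanSpace ℂ (Fin n)) (f : ℝ → ℝ) :
    EuclideanSpace ℂ (Fin n) →ₗ[ℂ] EuclideanSpace ℂ (Fin n) :=
  ∑ j : Fin n, (f (lam j) : ℂ) • ((innerSL ℂ (x j)).toLinearMap.smulRight (x j))

/-- `y` is a Ritz vector of `A` in `S` associated with the Ritz value `η`:
`y ∈ S`, `y ≠ 0`, `ρ(y) = η` and `Ay − ηy ⊥ S`. -/
def IsRitzVector {n : ℕ} (A : Matrix (Fin n) (Fin n) ℂ)
    (S : Submodule ℂ (EuclideanSpace ℂ (Fin n))) (η : ℝ)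
    (y : EuclideanSpace ℂ (Fin n)) : Prop :=
  y ∈ S ∧ y ≠ 0 ∧ rayleigh A y = η ∧
    ∀ v ∈ S, (inner ℂ v (Matrix.toEuclideanLin A y - (η : ℂ) • y) : ℂ) = 0

open scoped InnerProductSpace ComplexConjugate
open Finset

section AuxStmt4
variable {n p : ℕ}

noncomputable def onb {n : ℕ} (hn : 0 < n) (x : Fin n → EuclideanSpace ℂ (Fin n))
    (hx : Orthonormal ℂ x) : OrthonormalBasis (Fin n) ℂ (EuclideanSpace ℂ (Fin n)) :=
  haveI : Nonempty (Fin n) := Fin.pos_iff_nonempty.mp hn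
  (basisOfLinearIndependentOfCardEqFinrank hx.linearIndependent (by simp)).toOrthonormalBasis
    (by rwa [coe_basisOfLinearIndependentOfCardEqFinrank])

lemma onb_coe {n : ℕ} (hn : 0 < n) (x : Fin n → EuclideanSpace ℂ (Fin n))
    (hx : Orthonormal ℂ x) : ⇑(onb hn x hx) = x := by
  haveI : Nonempty (Fin n) := Fin.pos_iff_nonempty.mp hn
  simp only [onb, Module.Basis.coe_toOrthonormalBasis, coe_basisOfLinearIndependentOfCardEqFinrank]

lemma expand {n : ℕ} (hn : 0 < n) (x : Fin n → EuclideanSpace ℂ (Fin n))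
    (hx : Orthonormal ℂ x) (v : EuclideanSpace ℂ (Fin n)) :
    ∑ j, (inner ℂ (x j) v : ℂ) • x j = v := by
  have := (onb hn x hx).sum_repr' v
  rwa [onb_coe hn x hx] at this

lemma normsq_eq {n : ℕ} (hn : 0 < n) (x : Fin n → EuclideanSpace ℂ (Fin n))
    (hx : Orthonormal ℂ x) (v : EuclideanSpace ℂ (Fin n)) :
    ‖v‖ ^ 2 = ∑ j, ‖(inner ℂ (x j) v : ℂ)‖ ^ 2 := by
  have h := (onb hn x hx).sum_inner_mul_inner v v
  rw [onb_coe hn x hx] at h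
  have h2 : ∀ j : Fin n, (inner ℂ v (x j) : ℂ) * (inner ℂ (x j) v : ℂ)
      = ((‖(inner ℂ (x j) v : ℂ)‖ ^ 2 : ℝ) : ℂ) := by
    intro j
    calc (inner ℂ v (x j) : ℂ) * (inner ℂ (x j) v : ℂ)
        = (inner ℂ (x j) v : ℂ) * conj (inner ℂ (x j) v : ℂ) := by
          rw [inner_conj_symm]; ring
      _ = _ := by rw [Complex.mul_conj']; norm_cast
  rw [Finset.sum_congr rfl (fun j _ => h2 j)] at h
  have h3 : ((‖v‖:ℝ)^2 : ℝ) = ((inner ℂ v v : ℂ)).re := by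
    rw [← inner_self_eq_norm_sq (𝕜 := ℂ) v]; rfl
  rw [h3, ← h, Complex.re_sum]
  exact Finset.sum_congr rfl fun j _ => by norm_cast

lemma innerA_eq {n : ℕ} (hn : 0 < n) (x : Fin n → EuclideanSpace ℂ (Fin n))
    (hx : Orthonormal ℂ x) (A : Matrix (Fin n) (Fin n) ℂ) (lam : Fin n → ℝ)
    (heig : ∀ j, Matrix.toEuclideanLin A (x j) = (lam j : ℂ) • x j)
    (v : EuclideanSpace ℂ (Fin n)) :
    ((inner ℂ v (Matrix.toEuclideanLin A v) : ℂ)).re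
      = ∑ j, lam j * ‖(inner ℂ (x j) v : ℂ)‖ ^ 2 := by
  have hA : Matrix.toEuclideanLin A v = ∑ j, ((lam j : ℂ) * (inner ℂ (x j) v : ℂ)) • x j := by
    conv_lhs => rw [← expand hn x hx v]
    rw [map_sum]
    exact Finset.sum_congr rfl fun j _ => by rw [map_smul, heig, smul_smul, mul_comm]
  rw [hA, inner_sum]
  simp only [inner_smul_right]
  rw [Complex.re_sum]
  refine Finset.sum_congr rfl fun j _ => ?_
  have : (lam j : ℂ) * (inner ℂ (x j) v : ℂ) * (inner ℂ v (x j) : ℂ)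
      = (lam j : ℂ) * ((‖(inner ℂ (x j) v : ℂ)‖ ^ 2 : ℝ) : ℂ) := by
    calc (lam j : ℂ) * (inner ℂ (x j) v : ℂ) * (inner ℂ v (x j) : ℂ)
        = (lam j : ℂ) * ((inner ℂ (x j) v : ℂ) * conj (inner ℂ (x j) v : ℂ)) := by
          rw [inner_conj_symm]; ring
      _ = _ := by rw [Complex.mul_conj']; norm_cast
  rw [this]
  norm_cast

lemma rayleigh_eq {n : ℕ} (hn : 0 < n) (x : Fin n → EuclideanSpace ℂ (Fin n))
    (hx : Orthonormal ℂ x) (A : Matrix (Fin n) (Fin n) ℂ) (lam : Fin n → ℝ)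
    (heig : ∀ j, Matrix.toEuclideanLin A (x j) = (lam j : ℂ) • x j)
    (v : EuclideanSpace ℂ (Fin n)) :
    rayleigh A v = (∑ j, lam j * ‖(inner ℂ (x j) v : ℂ)‖ ^ 2)
      / (∑ j, ‖(inner ℂ (x j) v : ℂ)‖ ^ 2) := by
  rw [rayleigh, innerA_eq hn x hx A lam heig, normsq_eq hn x hx]


lemma le_rayleigh_iff (hn : 0 < n) (x : Fin n → EuclideanSpace ℂ (Fin n))
    (hx : Orthonormal ℂ x) (A : Matrix (Fin n) (Fin n) ℂ) (lam : Fin n → ℝ)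
    (heig : ∀ j, Matrix.toEuclideanLin A (x j) = (lam j : ℂ) • x j)
    (v : EuclideanSpace ℂ (Fin n)) (hv : v ≠ 0) (μ : ℝ) :
    μ ≤ rayleigh A v ↔ 0 ≤ ∑ j, (lam j - μ) * ‖(inner ℂ (x j) v : ℂ)‖ ^ 2 := by
  have hS2 : 0 < ∑ j, ‖(inner ℂ (x j) v : ℂ)‖ ^ 2 := by
    have h0 : 0 < ‖v‖ ^ 2 := by
      have := norm_pos_iff.mpr hv
      positivity
    rwa [normsq_eq hn x hx v] at h0
  rw [rayleigh_eq hn x hx A lam heig v, le_div_iff₀ hS2]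
  have : ∑ j, (lam j - μ) * ‖(inner ℂ (x j) v : ℂ)‖ ^ 2
      = (∑ j, lam j * ‖(inner ℂ (x j) v : ℂ)‖ ^ 2) - μ * ∑ j, ‖(inner ℂ (x j) v : ℂ)‖ ^ 2 := by
    rw [Finset.mul_sum, ← Finset.sum_sub_distrib]
    exact Finset.sum_congr rfl fun j _ => by ring
  rw [this]
  constructor <;> intro h <;> linarith

lemma rayleigh_le_iff (hn : 0 < n) (x : Fin n → EuclideanSpace ℂ (Fin n))
    (hx : Orthonormal ℂ x) (A : Matrix (Fin n) (Fin n) ℂ) (lam : Fin n → ℝ)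
    (heig : ∀ j, Matrix.toEuclideanLin A (x j) = (lam j : ℂ) • x j)
    (v : EuclideanSpace ℂ (Fin n)) (hv : v ≠ 0) (μ : ℝ) :
    rayleigh A v ≤ μ ↔ ∑ j, (lam j - μ) * ‖(inner ℂ (x j) v : ℂ)‖ ^ 2 ≤ 0 := by
  have hS2 : 0 < ∑ j, ‖(inner ℂ (x j) v : ℂ)‖ ^ 2 := by
    have h0 : 0 < ‖v‖ ^ 2 := by
      have := norm_pos_iff.mpr hv
      positivity
    rwa [normsq_eq hn x hx v] at h0
  rw [rayleigh_eq hn x hx A lam heig v, div_le_iff₀ hS2]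
  have : ∑ j, (lam j - μ) * ‖(inner ℂ (x j) v : ℂ)‖ ^ 2
      = (∑ j, lam j * ‖(inner ℂ (x j) v : ℂ)‖ ^ 2) - μ * ∑ j, ‖(inner ℂ (x j) v : ℂ)‖ ^ 2 := by
    rw [Finset.mul_sum, ← Finset.sum_sub_distrib]
    exact Finset.sum_congr rfl fun j _ => by ring
  constructor <;> intro h <;> [linarith [this]; linarith [this]]


-- global lower bound for rayleigh quotients
lemma min_le_rayleigh (hn : 0 < n) (x : Fin n → EuclideanSpace ℂ (Fin n))
    (hx : Orthonormal ℂ x) (A : Matrix (Fin n) (Fin n) ℂ) (lam : Fin n → ℝ)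
    (hlam : Antitone lam)
    (heig : ∀ j, Matrix.toEuclideanLin A (x j) = (lam j : ℂ) • x j)
    (v : EuclideanSpace ℂ (Fin n)) (hv : v ≠ 0) :
    lam ⟨n - 1, by omega⟩ ≤ rayleigh A v := by
  rw [le_rayleigh_iff hn x hx A lam heig v hv]
  refine Finset.sum_nonneg fun j _ => ?_
  have : lam ⟨n - 1, by omega⟩ ≤ lam j := hlam (by simp [Fin.le_def]; omega)
  have h2 : (0:ℝ) ≤ ‖(inner ℂ (x j) v : ℂ)‖ ^ 2 := by positivity
  nlinarith

-- the Ritz value of a p-dim subspace lower-bounds all Rayleigh quotients in it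
lemma ritz_le_rayleigh (hn : 0 < n) (x : Fin n → EuclideanSpace ℂ (Fin n))
    (hx : Orthonormal ℂ x) (A : Matrix (Fin n) (Fin n) ℂ) (lam : Fin n → ℝ)
    (hlam : Antitone lam)
    (heig : ∀ j, Matrix.toEuclideanLin A (x j) = (lam j : ℂ) • x j)
    {p : ℕ} (Y : Submodule ℂ (EuclideanSpace ℂ (Fin n))) (hY : Module.finrank ℂ Y = p)
    (v : EuclideanSpace ℂ (Fin n)) (hvY : v ∈ Y) (hv : v ≠ 0) :
    ritzValue A Y p ≤ rayleigh A v := by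
  apply csSup_le
  · exact ⟨lam ⟨n - 1, by omega⟩, Y, le_rfl, hY,
      fun u _ hu => min_le_rayleigh hn x hx A lam hlam heig u hu⟩
  · rintro r ⟨T, hTY, hTrk, hr⟩
    have : T = Y := Submodule.eq_of_le_of_finrank_eq hTY (by rw [hTrk, hY])
    exact hr v (this ▸ hvY) hv




lemma ritz_le_lam (hp : 0 < p) (hpn : p < n)
    (x : Fin n → EuclideanSpace ℂ (Fin n)) (hx : Orthonormal ℂ x)
    (A : Matrix (Fin n) (Fin n) ℂ) (lam : Fin n → ℝ) (hlam : Antitone lam)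
    (heig : ∀ j, Matrix.toEuclideanLin A (x j) = (lam j : ℂ) • x j)
    (Y : Submodule ℂ (EuclideanSpace ℂ (Fin n))) (hY : Module.finrank ℂ Y = p) :
    ritzValue A Y p ≤ lam ⟨p - 1, lt_of_le_of_lt (Nat.sub_le p 1) hpn⟩ := by
  have hn : 0 < n := by omega
  set a : Fin n := ⟨p - 1, by omega⟩ with ha
  set U : Submodule ℂ (EuclideanSpace ℂ (Fin n)) :=
    Submodule.span ℂ (Set.range (fun j : Set.Ici a => x j)) with hU
  have hli : LinearIndependent ℂ (fun j : Set.Ici a => x j) :=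
    hx.linearIndependent.comp _ Subtype.val_injective
  have hUrk : Module.finrank ℂ U = n - (p - 1) := by
    rw [hU, finrank_span_eq_card hli, Fintype.card_Ici, Fin.card_Ici]
  have hsum := Submodule.finrank_sup_add_finrank_inf_eq Y U
  have htop : Module.finrank ℂ ↥(Y ⊔ U) ≤ n := by
    have := Submodule.finrank_le (Y ⊔ U)
    simpa using this
  have hinf : 0 < Module.finrank ℂ ↥(Y ⊓ U) := by omega
  have hnebot : Y ⊓ U ≠ ⊥ := by
    intro hbot
    rw [hbot] at hinf
    simp at hinf
  obtain ⟨v, hvYU, hv0⟩ := Submodule.exists_mem_ne_zero_of_ne_bot hnebot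
  have hvY : v ∈ Y := hvYU.1
  have hvU : v ∈ U := hvYU.2
  -- coefficients below p-1 vanish
  have hcoef : ∀ k : Fin n, (k : ℕ) < p - 1 → (inner ℂ (x k) v : ℂ) = 0 := by
    intro k hk
    have : U ≤ LinearMap.ker ((innerSL ℂ (x k)).toLinearMap) := by
      rw [hU, Submodule.span_le]
      rintro _ ⟨⟨j, hj⟩, rfl⟩
      simp only [SetLike.mem_coe, LinearMap.mem_ker, ContinuousLinearMap.coe_coe, innerSL_apply_apply]
      have hkj : k ≠ j := by
        intro h
        have hj' : p - 1 ≤ (j:ℕ) := by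
          rw [Set.mem_Ici, ha, Fin.le_def] at hj
          simpa using hj
        omega
      exact hx.2 hkj
    exact this hvU
  have hρ : rayleigh A v ≤ lam a := by
    rw [rayleigh_le_iff hn x hx A lam heig v hv0]
    refine Finset.sum_nonpos fun j _ => ?_
    by_cases hj : (j : ℕ) < p - 1
    · rw [hcoef j hj]
      simp
    · have h1 : lam j ≤ lam a := hlam (by rw [ha, Fin.le_def]; simp; omega)
      have h2 : (0:ℝ) ≤ ‖(inner ℂ (x j) v : ℂ)‖ ^ 2 := by positivity
      nlinarith
  calc ritzValue A Y p ≤ rayleigh A v :=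
        ritz_le_rayleigh hn x hx A lam hlam heig Y hY v hvY hv0
    _ ≤ lam a := hρ


variable {n : ℕ} (x : Fin n → EuclideanSpace ℂ (Fin n)) (hx : Orthonormal ℂ x)

lemma matFun_apply (lam : Fin n → ℝ) (f : ℝ → ℝ) (v : EuclideanSpace ℂ (Fin n)) :
    matFun lam x f v = ∑ j, ((f (lam j) : ℂ) * (inner ℂ (x j) v : ℂ)) • x j := by
  rw [matFun, LinearMap.sum_apply]
  refine Finset.sum_congr rfl fun j _ => ?_
  rw [LinearMap.smul_apply, LinearMap.smulRight_apply, smul_smul]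
  rfl

include hx in
lemma inner_sum_smul (g : Fin n → ℂ) (s : Finset (Fin n)) (k : Fin n) :
    (inner ℂ (x k) (∑ j ∈ s, g j • x j) : ℂ) = if k ∈ s then g k else 0 := by
  rw [inner_sum]
  simp only [inner_smul_right]
  by_cases hk : k ∈ s
  · rw [if_pos hk]
    rw [Finset.sum_eq_single_of_mem k hk (fun b _ hb => by rw [hx.2 (Ne.symm hb), mul_zero])]
    have h1 : (inner ℂ (x k) (x k) : ℂ) = 1 := by
      rw [inner_self_eq_norm_sq_to_K, hx.1 k]
      norm_num
    rw [h1, mul_one]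
  · rw [if_neg hk]
    refine Finset.sum_eq_zero fun b hb => ?_
    have : k ≠ b := fun h => hk (h ▸ hb)
    rw [hx.2 this, mul_zero]


include hx in
lemma coeff_matFun (lam : Fin n → ℝ) (f : ℝ → ℝ) (v : EuclideanSpace ℂ (Fin n)) (k : Fin n) :
    (inner ℂ (x k) (matFun lam x f v) : ℂ) = (f (lam k) : ℂ) * (inner ℂ (x k) v : ℂ) := by
  rw [matFun_apply x lam f v, inner_sum_smul x hx]
  simp

end AuxStmt4

set_option maxHeartbeats 1600000 in
/-- Under `η_p > λ_{p+1}` and `|f(λ₁)| ≥ ⋯ ≥ |f(λ_p)| > ν_p`,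
for a Ritz vector `y' = f(A)y` associated with the smallest Ritz value `η'_p` of
`A` in `𝒴' = f(A)𝒴` with `λ_p > η'_p`, the auxiliary vector
`y° = f(λ_p) y_p + ν_p (y − y_p)` satisfies
`λ_p > η'_p = ρ(y') ≥ ρ(y°) ≥ ρ(y) ≥ η_p > λ_{p+1}` (in particular `y° ≠ 0`).
(0-indexed: `lam ⟨j⟩` is `λ_{j+1}`.) -/
theorem stmt4 {n p : ℕ} (hp : 0 < p) (hpn : p < n)
    (A : Matrix (Fin n) (Fin n) ℂ) (hA : A.IsHermitian)
    (lam : Fin n → ℝ) (hlam : Antitone lam)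
    (x : Fin n → EuclideanSpace ℂ (Fin n)) (hx : Orthonormal ℂ x)
    (heig : ∀ j, Matrix.toEuclideanLin A (x j) = (lam j : ℂ) • x j)
    (Y : Submodule ℂ (EuclideanSpace ℂ (Fin n))) (hY : Module.finrank ℂ Y = p)
    (hηp : lam ⟨p, hpn⟩ < ritzValue A Y p)
    (f : ℝ → ℝ) (νp : ℝ)
    (hνp : IsGreatest ((fun j => |f (lam j)|) '' {j : Fin n | p ≤ (j : ℕ)}) νp)
    (hmono : ∀ j k : Fin n, (j : ℕ) ≤ (k : ℕ) → (k : ℕ) < p →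
      |f (lam k)| ≤ |f (lam j)|)
    (hgt : νp < |f (lam ⟨p - 1, by omega⟩)|)
    (y : EuclideanSpace ℂ (Fin n)) (hyY : y ∈ Y) (hy0 : y ≠ 0)
    (hRitz : IsRitzVector A (Y.map (matFun lam x f))
      (ritzValue A (Y.map (matFun lam x f)) p) (matFun lam x f y))
    (hlt : ritzValue A (Y.map (matFun lam x f)) p < lam ⟨p - 1, by omega⟩)
    (yp yo : EuclideanSpace ℂ (Fin n))
    (hyp : yp = ∑ j ∈ Finset.univ.filter (fun j : Fin n => (j : ℕ) < p),
      (inner ℂ (x j) y : ℂ) • x j)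
    (hyo : yo = (f (lam ⟨p - 1, by omega⟩) : ℂ) • yp + (νp : ℂ) • (y - yp)) :
    ritzValue A (Y.map (matFun lam x f)) p < lam ⟨p - 1, by omega⟩ ∧
    ritzValue A (Y.map (matFun lam x f)) p = rayleigh A (matFun lam x f y) ∧
    rayleigh A yo ≤ rayleigh A (matFun lam x f y) ∧
    rayleigh A y ≤ rayleigh A yo ∧
    ritzValue A Y p ≤ rayleigh A y ∧
    lam ⟨p, hpn⟩ < ritzValue A Y p ∧
    yo ≠ 0 := by
  have hn : 0 < n := by omega
  set lp : ℝ := lam ⟨p - 1, by omega⟩ with hlp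
  set lq : ℝ := lam ⟨p, hpn⟩ with hlq
  set y' : EuclideanSpace ℂ (Fin n) := matFun lam x f y with hy'
  set c : Fin n → ℂ := fun j => (inner ℂ (x j) y : ℂ) with hc
  set w : Fin n → ℝ := fun j => ‖c j‖ ^ 2 with hw
  have hwnn : ∀ j, 0 ≤ w j := fun j => by positivity
  -- νp ≥ 0
  have hν0 : 0 ≤ νp := by
    obtain ⟨j₀, _, hj₀⟩ := hνp.1
    rw [← hj₀]; positivity
  have hfp0 : f lp ≠ 0 := by
    intro h; rw [h] at hgt; simp at hgt; linarith
  -- basic rayleigh facts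
  have hρy : ritzValue A Y p ≤ rayleigh A y :=
    ritz_le_rayleigh hn x hx A lam hlam heig Y hY y hyY hy0
  have hetalp : ritzValue A Y p ≤ lp := ritz_le_lam hp hpn x hx A lam hlam heig Y hY
  have hρyq : lq < rayleigh A y := lt_of_lt_of_le hηp hρy
  -- coefficients of yp, yo, y'
  have hcyp : ∀ k : Fin n, (inner ℂ (x k) yp : ℂ) = if (k : ℕ) < p then c k else 0 := by
    intro k
    rw [hyp, inner_sum_smul x hx]
    by_cases hk : (k : ℕ) < p
    · rw [if_pos (by simp [hk]), if_pos hk]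
    · rw [if_neg (by simp [hk]), if_neg hk]
  have hcyo : ∀ k : Fin n, (inner ℂ (x k) yo : ℂ)
      = if (k : ℕ) < p then (f lp : ℂ) * c k else (νp : ℂ) * c k := by
    intro k
    rw [hyo, inner_add_right, inner_smul_right, inner_smul_right, inner_sub_right, hcyp k]
    by_cases hk : (k : ℕ) < p
    · rw [if_pos hk, if_pos hk]; ring
    · rw [if_neg hk, if_neg hk]; ring
  have hcy' : ∀ k : Fin n, (inner ℂ (x k) y' : ℂ) = (f (lam k) : ℂ) * c k := fun k =>
    coeff_matFun x hx lam f y k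
  -- weights
  have hwyo : ∀ k : Fin n, ‖(inner ℂ (x k) yo : ℂ)‖ ^ 2
      = (if (k : ℕ) < p then (f lp) ^ 2 else νp ^ 2) * w k := by
    intro k
    rw [hcyo k]
    by_cases hk : (k : ℕ) < p <;>
      simp [hk, norm_mul, mul_pow, Complex.norm_real, sq_abs, hw]
  have hwy' : ∀ k : Fin n, ‖(inner ℂ (x k) y' : ℂ)‖ ^ 2 = (f (lam k)) ^ 2 * w k := by
    intro k
    rw [hcy' k]
    simp [norm_mul, mul_pow, Complex.norm_real, sq_abs, hw]
  -- some coefficient below p is nonzero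
  obtain ⟨j₁, hj₁p, hj₁⟩ : ∃ j : Fin n, (j : ℕ) < p ∧ c j ≠ 0 := by
    by_contra hcon
    push_neg at hcon
    have : rayleigh A y ≤ lq := by
      rw [rayleigh_le_iff hn x hx A lam heig y hy0]
      refine Finset.sum_nonpos fun j _ => ?_
      by_cases hj : (j : ℕ) < p
      · have h0 : (inner ℂ (x j) y : ℂ) = 0 := hcon j hj
        rw [h0]; simp
      · have h1 : lam j ≤ lq := hlam (by rw [Fin.le_def]; simp; omega)
        nlinarith [hwnn j]
    linarith
  -- yo ≠ 0
  have hyo0 : yo ≠ 0 := by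
    intro h
    apply hj₁
    have := hcyo j₁
    rw [h, inner_zero_right, if_pos hj₁p] at this
    have hfpc : (f lp : ℂ) ≠ 0 := by exact_mod_cast hfp0
    exact (mul_eq_zero.mp this.symm).resolve_left hfpc
  -- f lp ^ 2 > νp ^ 2
  have hsq : νp ^ 2 < (f lp) ^ 2 := by
    have h1 := abs_nonneg (f lp)
    have h2 := sq_abs (f lp)
    nlinarith [hgt, hν0]
  have hfmono : ∀ j : Fin n, (j : ℕ) < p → (f lp) ^ 2 ≤ (f (lam j)) ^ 2 := by
    intro j hj
    have h1 : |f lp| ≤ |f (lam j)| := by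
      have := hmono j ⟨p - 1, by omega⟩ (by simp; omega) (by simp; omega)
      exact this
    nlinarith [abs_nonneg (f lp), sq_abs (f lp), sq_abs (f (lam j))]
  have hfbot : ∀ j : Fin n, p ≤ (j : ℕ) → (f (lam j)) ^ 2 ≤ νp ^ 2 := by
    intro j hj
    have h1 : |f (lam j)| ≤ νp := hνp.2 ⟨j, hj, rfl⟩
    nlinarith [abs_nonneg (f (lam j)), sq_abs (f (lam j))]
  -- Step D : rayleigh A y ≤ rayleigh A yo
  have stepD : rayleigh A y ≤ rayleigh A yo := by
    set μ := rayleigh A y with hμ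
    have htot : ∑ j, (lam j - μ) * w j = 0 := by
      have h1 : 0 ≤ ∑ j, (lam j - μ) * w j :=
        (le_rayleigh_iff hn x hx A lam heig y hy0 μ).mp le_rfl
      have h2 : ∑ j, (lam j - μ) * w j ≤ 0 :=
        (rayleigh_le_iff hn x hx A lam heig y hy0 μ).mp le_rfl
      linarith
    set g : Fin n → ℝ := fun j => (lam j - μ) * w j with hg
    set T : ℝ := ∑ j ∈ Finset.univ.filter (fun j : Fin n => (j : ℕ) < p), g j with hT
    set B : ℝ := ∑ j ∈ Finset.univ.filter (fun j : Fin n => ¬ (j : ℕ) < p), g j with hB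
    have hTB : T + B = 0 := by
      rw [hT, hB, Finset.sum_filter_add_sum_filter_not]
      exact htot
    have hBle : B ≤ 0 := by
      refine Finset.sum_nonpos fun j hj => ?_
      rw [Finset.mem_filter] at hj
      have h1 : lam j ≤ lq := hlam (by rw [Fin.le_def]; simp; omega)
      have : lam j - μ ≤ 0 := by linarith
      exact mul_nonpos_of_nonpos_of_nonneg this (hwnn j)
    have hTge : 0 ≤ T := by linarith
    rw [le_rayleigh_iff hn x hx A lam heig yo hyo0 μ]
    have hcalc : ∑ j, (lam j - μ) * ‖(inner ℂ (x j) yo : ℂ)‖ ^ 2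
        = (f lp) ^ 2 * T + νp ^ 2 * B := by
      have h1 : ∀ j : Fin n, (lam j - μ) * ‖(inner ℂ (x j) yo : ℂ)‖ ^ 2
          = if (j : ℕ) < p then (f lp) ^ 2 * g j else νp ^ 2 * g j := by
        intro j
        rw [hwyo j]
        by_cases hj : (j : ℕ) < p <;> simp [hj, hg] <;> ring
      rw [Finset.sum_congr rfl fun j _ => h1 j, Finset.sum_ite, ← Finset.mul_sum,
        ← Finset.mul_sum]
    rw [hcalc]
    have hrw : (f lp) ^ 2 * T + νp ^ 2 * B
        = ((f lp) ^ 2 - νp ^ 2) * T + νp ^ 2 * (T + B) := by ring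
    rw [hrw, hTB, mul_zero, add_zero]
    exact mul_nonneg (by linarith) hTge
  -- Step E : lq ≤ rayleigh A y'
  have hy'0 : y' ≠ 0 := hRitz.2.1
  have hρyo : lq < rayleigh A yo := lt_of_lt_of_le hρyq stepD
  have stepE : lq ≤ rayleigh A y' := by
    rw [le_rayleigh_iff hn x hx A lam heig y' hy'0 lq]
    have hyoge : 0 ≤ ∑ j, (lam j - lq) * ‖(inner ℂ (x j) yo : ℂ)‖ ^ 2 :=
      (le_rayleigh_iff hn x hx A lam heig yo hyo0 lq).mp (le_of_lt hρyo)
    refine le_trans hyoge (Finset.sum_le_sum fun j _ => ?_)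
    rw [hwyo j, hwy' j]
    by_cases hj : (j : ℕ) < p
    · rw [if_pos hj]
      have h1 : lq ≤ lam j := hlam (by rw [Fin.le_def]; simp; omega)
      have h2 := hfmono j hj
      exact mul_le_mul_of_nonneg_left
        (mul_le_mul_of_nonneg_right h2 (hwnn j)) (by linarith)
    · rw [if_neg hj]
      have h1 : lam j ≤ lq := hlam (by rw [Fin.le_def]; simp; omega)
      have h2 := hfbot j (by omega)
      exact mul_le_mul_of_nonpos_left
        (mul_le_mul_of_nonneg_right h2 (hwnn j)) (by linarith)
  -- Step F : rayleigh A yo ≤ rayleigh A y'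
  have hρy'eq : rayleigh A y' = ritzValue A (Y.map (matFun lam x f)) p := hRitz.2.2.1
  have stepF : rayleigh A yo ≤ rayleigh A y' := by
    set μ := rayleigh A y' with hμ
    have hmulp : μ < lp := by rw [hρy'eq]; exact hlt
    have h0 : ∑ j, (lam j - μ) * ‖(inner ℂ (x j) y' : ℂ)‖ ^ 2 ≤ 0 :=
      (rayleigh_le_iff hn x hx A lam heig y' hy'0 μ).mp le_rfl
    rw [rayleigh_le_iff hn x hx A lam heig yo hyo0 μ]
    refine le_trans (Finset.sum_le_sum fun j _ => ?_) h0
    rw [hwyo j, hwy' j]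
    by_cases hj : (j : ℕ) < p
    · rw [if_pos hj]
      have h1 : lp ≤ lam j := hlam (by rw [Fin.le_def]; simp; omega)
      have h2 := hfmono j hj
      exact mul_le_mul_of_nonneg_left
        (mul_le_mul_of_nonneg_right h2 (hwnn j)) (by linarith)
    · rw [if_neg hj]
      have h1 : lam j ≤ lq := hlam (by rw [Fin.le_def]; simp; omega)
      have h2 := hfbot j (by omega)
      have h3 : lq ≤ μ := stepE
      exact mul_le_mul_of_nonpos_left
        (mul_le_mul_of_nonneg_right h2 (hwnn j)) (by linarith)
  exact ⟨hlt, hρy'eq.symm, stepF, stepD, hρy, hηp, hyo0⟩
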